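/- Let G = (V,E) be a finite simple connected graph, let H be a monophonic halfspace of G, and let F = ¬G[Γ(H) ∪ Γ(V∖H)] be the complement of the subgraph induced by the union of the two borders. Then for every edge {x,y} of F, exactly one of x,y belongs to H; consequently every connected component of F is bipartite, with sides given by its intersection with H and with V∖H. -/

import Mathlib

open SimpleGraph

variable {V : Type*}

/-- A walk is an induced (chordless) path. -/
def IsInducedPath (G : SimpleGraph V) {x y : V} (p : G.Walk x y) : Prop :=
  p.IsPath ∧ ∀ a b : V, a ∈ p.support → b ∈ p.support → G.Adj a b → s(a, b) ∈ p.edges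

/-- The monophonic interval between `u` and `v`: all vertices on some induced
path between `u` and `v` (empty if `u = v`). -/
def mInterval (G : SimpleGraph V) (u v : V) : Set V :=
  {z | u ≠ v ∧ ∃ p : G.Walk u v, IsInducedPath G p ∧ z ∈ p.support}

/-- Monophonic convexity. -/
def MConvex (G : SimpleGraph V) (C : Set V) : Prop :=
  ∀ x ∈ C, ∀ y ∈ C, mInterval G x y ⊆ C

/-- Monophonic halfspace. -/
def IsMHalfspace (G : SimpleGraph V) (H : Set V) : Prop :=
  MConvex G H ∧ MConvex G Hᶜ

/-- The monophonic shadow `u/v`. -/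
def mShadow (G : SimpleGraph V) (u v : V) : Set V :=
  {z | u ∈ mInterval G z v}

/-- The border `Γ(X)`: vertices of `X` with a neighbour outside `X`. -/
def border (G : SimpleGraph V) (X : Set V) : Set V :=
  {x | x ∈ X ∧ ∃ y, y ∉ X ∧ G.Adj x y}

/-- `△⁻uv = N(u) ∩ N(v)`. -/
def triMinus (G : SimpleGraph V) (u v : V) : Set V :=
  G.neighborSet u ∩ G.neighborSet v

/-- `△uv = (N(u) ∩ N(v)) ∪ {u, v}`. -/
def triangleSet (G : SimpleGraph V) (u v : V) : Set V :=
  (G.neighborSet u ∩ G.neighborSet v) ∪ {u, v}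

/-- `□uv`: vertices appearing in some 4-cycle of `G` having `{u,v}` as an edge. -/
def squareSet (G : SimpleGraph V) (u v : V) : Set V :=
  {x | ∃ a b : V, G.Adj v a ∧ G.Adj a b ∧ G.Adj b u ∧
    a ≠ u ∧ a ≠ v ∧ b ≠ u ∧ b ≠ v ∧ a ≠ b ∧ (x = u ∨ x = v ∨ x = a ∨ x = b)}

/-- `A = □uv \ △⁻uv`. -/
def setA (G : SimpleGraph V) (u v : V) : Set V :=
  squareSet G u v \ triMinus G u v

/-- `Aᵘ = {x ∈ A : d(x,u) < d(x,v)}`. -/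
noncomputable def setAu (G : SimpleGraph V) (u v : V) : Set V :=
  {x ∈ setA G u v | G.dist x u < G.dist x v}

/-- `Aᵛ = A \ Aᵘ`. -/
noncomputable def setAv (G : SimpleGraph V) (u v : V) : Set V :=
  setA G u v \ setAu G u v

/-- The graph obtained from `G` by deleting all edges of the induced subgraph `G[S]`. -/
def delInduced (G : SimpleGraph V) (S : Set V) : SimpleGraph V where
  Adj a b := G.Adj a b ∧ ¬(a ∈ S ∧ b ∈ S)
  symm := by
    constructor
    intro a b h
    exact ⟨h.1.symm, fun hc => h.2 ⟨hc.2, hc.1⟩⟩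
  loopless := ⟨fun a h => G.irrefl h.1⟩

/-- The graph `T = G \ E(G[□uv ∪ △⁻uv])`. -/
def graphT (G : SimpleGraph V) (u v : V) : SimpleGraph V :=
  delInduced G (squareSet G u v ∪ triMinus G u v)

/-- The monophonic convex hull of `X`. -/
def mHull (G : SimpleGraph V) (X : Set V) : Set V :=
  ⋂₀ {C | MConvex G C ∧ X ⊆ C}

/-- `S` is an `(a,b)`-separator: every walk from `a` to `b` meets `S`. -/
def IsSeparator (G : SimpleGraph V) (S : Set V) (a b : V) : Prop :=
  ∀ p : G.Walk a b, ∃ s ∈ S, s ∈ p.support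

/-- The cutset `δ(X)` as a set of edges. -/
def cutset (G : SimpleGraph V) (X : Set V) : Set (Sym2 V) :=
  {e | e ∈ G.edgeSet ∧ ∃ a b : V, e = s(a, b) ∧ a ∈ X ∧ b ∉ X}

/-- A family of sets `ℋ` shatters a set `S`. -/
def Shatters (ℋ : Set (Set V)) (S : Set V) : Prop :=
  ∀ T ⊆ S, ∃ H ∈ ℋ, H ∩ S = T

/-- `G` is `S₄` for monophonic convexity: disjoint m-convex sets are
halfspace separable. -/
def IsS4 (G : SimpleGraph V) : Prop :=
  ∀ C₁ C₂ : Set V, MConvex G C₁ → MConvex G C₂ → Disjoint C₁ C₂ →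
    ∃ H : Set V, IsMHalfspace G H ∧ C₁ ⊆ H ∧ C₂ ⊆ Hᶜ

section MyAux
variable {G : SimpleGraph V}
open SimpleGraph.Walk

lemma isInducedPath_nil {u : V} : IsInducedPath G (SimpleGraph.Walk.nil : G.Walk u u) := by
  refine ⟨SimpleGraph.Walk.IsPath.nil, ?_⟩
  intro a b ha hb hadj
  simp only [support_nil, List.mem_singleton] at ha hb
  subst ha; subst hb
  exact absurd hadj (G.irrefl)

lemma edge_mem_of_length_one {u v : V} (w : G.Walk u v) (h : w.length = 1) :
    s(u, v) ∈ w.edges := by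
  cases w with
  | nil => simp at h
  | cons hadj w' =>
    have h0 : w'.length = 0 := by simpa using h
    have hv := SimpleGraph.Walk.eq_of_length_eq_zero h0
    subst hv
    simp

lemma takeUntil_dropUntil_inter [DecidableEq V] {u v z : V} {p : G.Walk u v}
    (hp : p.IsPath) (hz : z ∈ p.support) {a : V}
    (ha1 : a ∈ (p.takeUntil z hz).support) (ha2 : a ∈ (p.dropUntil z hz).support) :
    a = z := by
  have hsup : p.support = (p.takeUntil z hz).support ++ (p.dropUntil z hz).support.tail := by
    conv_lhs => rw [← p.take_spec hz]
    exact support_append _ _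
  have hnd := hp.support_nodup
  rw [hsup, List.nodup_append] at hnd
  rw [(p.dropUntil z hz).support_eq_cons, List.mem_cons] at ha2
  rcases ha2 with rfl | ha2
  · rfl
  · exact absurd rfl (hnd.2.2 a ha1 a ha2)

lemma IsInducedPath.takeUntil' [DecidableEq V] {u v z : V} {p : G.Walk u v}
    (hp : IsInducedPath G p) (hz : z ∈ p.support) :
    IsInducedPath G (p.takeUntil z hz) := by
  refine ⟨hp.1.takeUntil hz, ?_⟩
  intro a b ha hb hadj
  have hmem := hp.2 a b (p.support_takeUntil_subset hz ha)
    (p.support_takeUntil_subset hz hb) hadj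
  have hsplit : p.edges = (p.takeUntil z hz).edges ++ (p.dropUntil z hz).edges := by
    conv_lhs => rw [← p.take_spec hz]
    exact edges_append _ _
  rw [hsplit, List.mem_append] at hmem
  rcases hmem with h | h
  · exact h
  · exfalso
    have ha' : a ∈ (p.dropUntil z hz).support := fst_mem_support_of_mem_edges _ h
    have hb' : b ∈ (p.dropUntil z hz).support := snd_mem_support_of_mem_edges _ h
    have e1 := takeUntil_dropUntil_inter hp.1 hz ha ha'
    have e2 := takeUntil_dropUntil_inter hp.1 hz hb hb'
    exact hadj.ne (e1.trans e2.symm)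

lemma IsInducedPath.dropUntil' [DecidableEq V] {u v z : V} {p : G.Walk u v}
    (hp : IsInducedPath G p) (hz : z ∈ p.support) :
    IsInducedPath G (p.dropUntil z hz) := by
  refine ⟨hp.1.dropUntil hz, ?_⟩
  intro a b ha hb hadj
  have hmem := hp.2 a b (p.support_dropUntil_subset hz ha)
    (p.support_dropUntil_subset hz hb) hadj
  have hsplit : p.edges = (p.takeUntil z hz).edges ++ (p.dropUntil z hz).edges := by
    conv_lhs => rw [← p.take_spec hz]
    exact edges_append _ _
  rw [hsplit, List.mem_append] at hmem
  rcases hmem with h | h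
  · exfalso
    have ha' : a ∈ (p.takeUntil z hz).support := fst_mem_support_of_mem_edges _ h
    have hb' : b ∈ (p.takeUntil z hz).support := snd_mem_support_of_mem_edges _ h
    have e1 := takeUntil_dropUntil_inter hp.1 hz ha' ha
    have e2 := takeUntil_dropUntil_inter hp.1 hz hb' hb
    exact hadj.ne (e1.trans e2.symm)
  · exact h

end MyAux

section MyAux2
variable {G : SimpleGraph V}
open SimpleGraph.Walk

lemma exists_isInducedPath {u v : V} (h : G.Reachable u v) :
    ∃ p : G.Walk u v, IsInducedPath G p := by
  classical
  obtain ⟨w0⟩ := h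
  suffices H : ∀ n (w : G.Walk u v), w.length ≤ n → ∃ p : G.Walk u v, IsInducedPath G p from
    H w0.length w0 le_rfl
  intro n
  induction n with
  | zero =>
    intro w hw
    have h0 : w.length = 0 := Nat.le_zero.mp hw
    have huv := SimpleGraph.Walk.eq_of_length_eq_zero h0
    subst huv
    exact ⟨SimpleGraph.Walk.nil, isInducedPath_nil⟩
  | succ n ih =>
    intro w hw
    set p := w.bypass with hpdef
    by_cases hip : IsInducedPath G p
    · exact ⟨p, hip⟩
    · have hpath : p.IsPath := w.bypass_isPath
      rw [IsInducedPath] at hip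
      push_neg at hip
      obtain ⟨a, b, ha, hb, hadj, hne⟩ := hip hpath
      have hplen : p.length ≤ n + 1 := le_trans (w.length_bypass_le) hw
      rw [← p.take_spec ha, mem_support_append_iff] at hb
      have hlen : p.length = (p.takeUntil a ha).length + (p.dropUntil a ha).length := by
        conv_lhs => rw [← p.take_spec ha]
        exact length_append _ _
      rcases hb with hb | hb
      · -- b is before a on p
        set t := p.takeUntil a ha with htdef
        set d := p.dropUntil a ha with hddef
        set t2 := t.takeUntil b hb with ht2def
        have hlt : t.length = t2.length + (t.dropUntil b hb).length := by
          conv_lhs => rw [← t.take_spec hb]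
          exact length_append _ _
        have h2 : 2 ≤ (t.dropUntil b hb).length := by
          rcases Nat.lt_or_ge (t.dropUntil b hb).length 2 with hl | hl
          · interval_cases hcase : (t.dropUntil b hb).length
            · exact absurd (SimpleGraph.Walk.eq_of_length_eq_zero hcase) hadj.ne'
            · exfalso
              have := edge_mem_of_length_one _ hcase
              have : s(b, a) ∈ p.edges :=
                (p.edges_takeUntil_subset ha) ((t.edges_dropUntil_subset hb) this)
              rw [Sym2.eq_swap] at this
              exact hne this
          · exact hl
        have hw' : (t2.append (SimpleGraph.Walk.cons hadj.symm d)).length ≤ n := by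
          rw [length_append, length_cons]
          omega
        exact ih _ hw'
      · -- b is after a on p
        set t := p.takeUntil a ha with htdef
        set d := p.dropUntil a ha with hddef
        set d2 := d.dropUntil b hb with hd2def
        have hlt : d.length = (d.takeUntil b hb).length + d2.length := by
          conv_lhs => rw [← d.take_spec hb]
          exact length_append _ _
        have h2 : 2 ≤ (d.takeUntil b hb).length := by
          rcases Nat.lt_or_ge (d.takeUntil b hb).length 2 with hl | hl
          · interval_cases hcase : (d.takeUntil b hb).length
            · exact absurd (SimpleGraph.Walk.eq_of_length_eq_zero hcase) hadj.ne
            · exfalso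
              have := edge_mem_of_length_one _ hcase
              have : s(a, b) ∈ p.edges :=
                (p.edges_dropUntil_subset ha) ((d.edges_takeUntil_subset hb) this)
              exact hne this
          · exact hl
        have hw' : (t.append (SimpleGraph.Walk.cons hadj d2)).length ≤ n := by
          rw [length_append, length_cons]
          omega
        exact ih _ hw'

end MyAux2

section MyAux3
variable {G : SimpleGraph V}
open SimpleGraph.Walk

lemma detour_base {x y x' y' : V} (hxy : x ≠ y) (hnadj : ¬G.Adj x y)
    (q : G.Walk x' y') (hq : IsInducedPath G q)
    (hxx' : G.Adj x x') (hyy' : G.Adj y y')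
    (hxs : x ∉ q.support) (hys : y ∉ q.support)
    (hax : ∀ z ∈ q.support, G.Adj x z → z = x')
    (hay : ∀ z ∈ q.support, G.Adj y z → z = y') :
    ∃ p : G.Walk x y, IsInducedPath G p ∧
      ∀ z ∈ p.support, z = x ∨ z = y ∨ z ∈ q.support := by
  refine ⟨SimpleGraph.Walk.cons hxx' (q.concat hyy'.symm), ⟨?_, ?_⟩, ?_⟩
  · rw [SimpleGraph.Walk.isPath_def, support_cons, support_concat]
    have h1 : (q.support ++ [y]).Nodup := by
      rw [List.nodup_append]
      exact ⟨hq.1.support_nodup, List.nodup_singleton y,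
        fun a ha b hb => by rw [List.mem_singleton] at hb; subst hb; exact fun h => hys (h ▸ ha)⟩
    rw [List.nodup_cons]
    refine ⟨?_, h1⟩
    rw [List.mem_append, List.mem_singleton]
    rintro (h | rfl)
    · exact hxs h
    · exact hxy rfl
  · intro a b ha hb hadj
    have hedges : (SimpleGraph.Walk.cons hxx' (q.concat hyy'.symm)).edges
        = s(x, x') :: (q.edges ++ [s(y', y)]) := by
      rw [edges_cons, edges_concat, List.concat_eq_append]
    rw [support_cons, support_concat] at ha hb
    rw [hedges]
    simp only [List.mem_cons, List.mem_append, List.mem_singleton, List.not_mem_nil,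
      or_false] at ha hb ⊢
    have hmemq : ∀ c, c = x ∨ c ∈ q.support ∨ c = y →
        c = x ∨ c = y ∨ c ∈ q.support := by tauto
    rcases hmemq a ha with rfl | rfl | haq
    · rcases hmemq b hb with rfl | rfl | hbq
      · exact absurd hadj (G.irrefl)
      · exact absurd hadj hnadj
      · have : b = x' := hax b hbq hadj
        subst this
        exact Or.inl rfl
    · rcases hmemq b hb with rfl | rfl | hbq
      · exact absurd hadj.symm hnadj
      · exact absurd hadj (G.irrefl)
      · have : b = y' := hay b hbq hadj
        subst this
        exact Or.inr (Or.inr Sym2.eq_swap)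
    · rcases hmemq b hb with rfl | rfl | hbq
      · have : a = x' := hax a haq hadj.symm
        subst this
        exact Or.inl Sym2.eq_swap
      · have : a = y' := hay a haq hadj.symm
        subst this
        exact Or.inr (Or.inr rfl)
      · exact Or.inr (Or.inl (hq.2 a b haq hbq hadj))
  · intro z hz
    rw [support_cons, support_concat] at hz
    simp only [List.mem_cons, List.mem_append, List.mem_singleton] at hz
    tauto

lemma detour [DecidableEq V] {x y : V} (hxy : x ≠ y) (hnadj : ¬G.Adj x y) :
    ∀ n {x' y' : V} (q : G.Walk x' y'), q.length ≤ n → IsInducedPath G q →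
      G.Adj x x' → G.Adj y y' → x ∉ q.support → y ∉ q.support →
      ∃ p : G.Walk x y, IsInducedPath G p ∧
        ∀ z ∈ p.support, z = x ∨ z = y ∨ z ∈ q.support := by
  intro n
  induction n with
  | zero =>
    intro x' y' q hlen hq hxx' hyy' hxs hys
    have h0 : q.length = 0 := Nat.le_zero.mp hlen
    have hx'y' := SimpleGraph.Walk.eq_of_length_eq_zero h0
    subst hx'y'
    have hsupp : q.support = [x'] := by
      cases q with
      | nil => simp
      | cons h q' => simp at h0
    refine detour_base hxy hnadj q hq hxx' hyy' hxs hys ?_ ?_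
    · intro z hz _
      rw [hsupp, List.mem_singleton] at hz
      exact hz
    · intro z hz _
      rw [hsupp, List.mem_singleton] at hz
      exact hz
  | succ n ih =>
    intro x' y' q hlen hq hxx' hyy' hxs hys
    by_cases hz : ∃ z ∈ q.support, z ≠ x' ∧ G.Adj x z
    · obtain ⟨z, hzs, hzx', hadjz⟩ := hz
      have hlenq : q.length = (q.takeUntil z hzs).length + (q.dropUntil z hzs).length := by
        conv_lhs => rw [← q.take_spec hzs]
        exact length_append _ _
      have h1 : 1 ≤ (q.takeUntil z hzs).length := by
        rcases Nat.eq_zero_or_pos (q.takeUntil z hzs).length with h0 | h0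
        · exact absurd (SimpleGraph.Walk.eq_of_length_eq_zero h0) (Ne.symm hzx')
        · exact h0
      obtain ⟨p, hp, hsub⟩ := ih (q.dropUntil z hzs) (by omega) (hq.dropUntil' hzs) hadjz hyy'
        (fun h => hxs (q.support_dropUntil_subset hzs h))
        (fun h => hys (q.support_dropUntil_subset hzs h))
      exact ⟨p, hp, fun w hw => by
        rcases hsub w hw with h | h | h
        · exact Or.inl h
        · exact Or.inr (Or.inl h)
        · exact Or.inr (Or.inr (q.support_dropUntil_subset hzs h))⟩
    · by_cases hw : ∃ z ∈ q.support, z ≠ y' ∧ G.Adj y z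
      · obtain ⟨z, hzs, hzy', hadjz⟩ := hw
        have hlenq : q.length = (q.takeUntil z hzs).length + (q.dropUntil z hzs).length := by
          conv_lhs => rw [← q.take_spec hzs]
          exact length_append _ _
        have h1 : 1 ≤ (q.dropUntil z hzs).length := by
          rcases Nat.eq_zero_or_pos (q.dropUntil z hzs).length with h0 | h0
          · exact absurd (SimpleGraph.Walk.eq_of_length_eq_zero h0) hzy'
          · exact h0
        obtain ⟨p, hp, hsub⟩ := ih (q.takeUntil z hzs) (by omega) (hq.takeUntil' hzs) hxx' hadjz
          (fun h => hxs (q.support_takeUntil_subset hzs h))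
          (fun h => hys (q.support_takeUntil_subset hzs h))
        exact ⟨p, hp, fun w hw' => by
          rcases hsub w hw' with h | h | h
          · exact Or.inl h
          · exact Or.inr (Or.inl h)
          · exact Or.inr (Or.inr (q.support_takeUntil_subset hzs h))⟩
      · push_neg at hz hw
        refine detour_base hxy hnadj q hq hxx' hyy' hxs hys ?_ ?_
        · intro z hzs hadjz
          by_contra hne
          exact hz z hzs hne hadjz
        · intro z hzs hadjz
          by_contra hne
          exact hw z hzs hne hadjz

end MyAux3

section MyAux4
variable {G : SimpleGraph V}
open SimpleGraph.Walk

lemma no_two_border (hG : G.Connected) {H : Set V}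
    (hH : IsMHalfspace G H) {x y : V} (hx : x ∈ border G H) (hy : y ∈ border G H)
    (hxy : x ≠ y) (hnadj : ¬G.Adj x y) : False := by
  classical
  obtain ⟨hxH, x', hx', hxx'⟩ := hx
  obtain ⟨hyH, y', hy', hyy'⟩ := hy
  obtain ⟨q, hq, hqsub⟩ : ∃ q : G.Walk x' y', IsInducedPath G q ∧
      ∀ z ∈ q.support, z ∉ H := by
    by_cases hxy' : x' = y'
    · subst hxy'
      refine ⟨SimpleGraph.Walk.nil, isInducedPath_nil, ?_⟩
      intro z hz
      simp only [support_nil, List.mem_singleton] at hz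
      subst hz
      exact hx'
    · obtain ⟨q, hq⟩ := exists_isInducedPath (hG.preconnected x' y')
      exact ⟨q, hq, fun z hz => hH.2 x' hx' y' hy' ⟨hxy', q, hq, hz⟩⟩
  have hxs : x ∉ q.support := fun h => hqsub x h hxH
  have hys : y ∉ q.support := fun h => hqsub y h hyH
  obtain ⟨p, hp, hsub⟩ := detour hxy hnadj q.length q le_rfl hq hxx' hyy' hxs hys
  cases p with
  | nil => exact hxy rfl
  | cons h p' =>
    rename_i c
    have hcs : c ∈ (SimpleGraph.Walk.cons h p').support := by
      rw [support_cons]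
      exact List.mem_cons_of_mem _ p'.start_mem_support
    have hcH : c ∈ H := hH.1 x hxH y hyH ⟨hxy, SimpleGraph.Walk.cons h p', hp, hcs⟩
    rcases hsub c hcs with rfl | rfl | hcq
    · exact h.ne rfl
    · exact hnadj h
    · exact hqsub c hcq hcH

end MyAux4

/-- in `F = ¬G[Γ(H) ∪ Γ(V∖H)]`, every edge has exactly one endpoint
in `H`; consequently `F` is bipartite. -/
theorem compl_borders_bipartite [Fintype V] (G : SimpleGraph V)
    (hG : G.Connected) (H : Set V) (hH : IsMHalfspace G H) :
    (∀ x y : ↥(border G H ∪ border G Hᶜ),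
        ((G.induce (border G H ∪ border G Hᶜ))ᶜ).Adj x y →
          ((x : V) ∈ H ↔ (y : V) ∉ H)) ∧
    ((G.induce (border G H ∪ border G Hᶜ))ᶜ).Colorable 2 := by

  classical
  have key : ∀ x y : ↥(border G H ∪ border G Hᶜ),
      ((G.induce (border G H ∪ border G Hᶜ))ᶜ).Adj x y →
        ((x : V) ∈ H ↔ (y : V) ∉ H) := by
    intro x y hadj
    rw [SimpleGraph.compl_adj] at hadj
    obtain ⟨hne, hnadj⟩ := hadj
    have hne' : (x : V) ≠ (y : V) := fun h => hne (Subtype.ext h)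
    have hnadj' : ¬ G.Adj (x : V) (y : V) := fun h => hnadj h
    have hH' : IsMHalfspace G Hᶜ := ⟨hH.2, by rw [compl_compl]; exact hH.1⟩
    constructor
    · intro hxH hyH
      have hxb : (x : V) ∈ border G H := by
        rcases x.2 with h | h
        · exact h
        · exact absurd hxH h.1
      have hyb : (y : V) ∈ border G H := by
        rcases y.2 with h | h
        · exact h
        · exact absurd hyH h.1
      exact no_two_border hG hH hxb hyb hne' hnadj'
    · intro hyH
      by_contra hxH
      have hxb : (x : V) ∈ border G Hᶜ := by
        rcases x.2 with h | h
        · exact absurd h.1 hxH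
        · exact h
      have hyb : (y : V) ∈ border G Hᶜ := by
        rcases y.2 with h | h
        · exact absurd h.1 hyH
        · exact h
      exact no_two_border hG hH' hxb hyb hne' hnadj'
  refine ⟨key, ?_⟩
  refine ⟨SimpleGraph.Coloring.mk (fun v => if (v : V) ∈ H then 0 else 1) ?_⟩
  intro v w hadj
  have hiff := key v w hadj
  by_cases h1 : (v : V) ∈ H <;> by_cases h2 : (w : V) ∈ H
  · exact absurd h2 (hiff.mp h1)
  · simp [h1, h2]
  · simp [h1, h2]
  · exact absurd (hiff.mpr h2) h1
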